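/- Let n and h be positive integers and m = v_1(n,h) + 1 where v_1(n,h) = max over d | n of (⌊(d−2)/h⌋ + 1)·(n/d). Then for every positive divisor d of n, h·⌈m/d⌉ − h + 1 ≥ n/d; that is, u(n, v_1(n,h)+1, h) ≥ n. -/
import Mathlib


/-- The function `v_g(n,h)`: the maximum over positive divisors `d` of `n` of
`(⌊(d - 1 - gcd(d,g))/h⌋ + 1) * (n/d)`. -/
def vFun (g n h : ℕ) : ℤ :=
  (insert 1 n.divisors).sup' (Finset.insert_nonempty _ _) fun d =>
    (((d : ℤ) - 1 - (Nat.gcd d g : ℤ)) / (h : ℤ) + 1) * ((n : ℤ) / (d : ℤ))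

theorem stmt15 (n h : ℕ) (hn : 0 < n) (hh : 0 < h) (m : ℤ) (hm : m = vFun 1 n h + 1) :
    ∀ d ∈ n.divisors, (n : ℤ) / (d : ℤ) ≤ (h : ℤ) * ⌈(m : ℚ) / (d : ℚ)⌉ - (h : ℤ) + 1 := by
  intro d hd
  obtain ⟨hdvd, hn0⟩ := Nat.mem_divisors.mp hd
  obtain ⟨k, hk⟩ := hdvd
  have hd0 : 0 < d := Nat.pos_of_dvd_of_pos ⟨k, hk⟩ hn
  have hk0 : 0 < k := by
    rcases Nat.eq_zero_or_pos k with h0 | h0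
    · exfalso; rw [h0, mul_zero] at hk; omega
    · exact h0
  have hkZ : ((k : ℤ)) ≠ 0 := by exact_mod_cast hk0.ne'
  have hdZ : ((d : ℤ)) ≠ 0 := by exact_mod_cast hd0.ne'
  have hkmem : k ∈ insert 1 n.divisors :=
    Finset.mem_insert.mpr (Or.inr (Nat.mem_divisors.mpr ⟨⟨d, by rw [hk, mul_comm]⟩, hn0⟩))
  set s : ℤ := ((k : ℤ) - 2) / (h : ℤ) + 1 with hs
  -- the sup' bound at witness k
  have hle := Finset.le_sup' (f := fun d : ℕ =>
      (((d : ℤ) - 1 - (Nat.gcd d 1 : ℤ)) / (h : ℤ) + 1) * ((n : ℤ) / (d : ℤ))) hkmem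
  have hgcd : Nat.gcd k 1 = 1 := Nat.gcd_one_right k
  have hnk : (n : ℤ) / (k : ℤ) = (d : ℤ) := by
    rw [hk]; push_cast; exact Int.mul_ediv_cancel _ hkZ
  rw [hgcd, hnk] at hle
  have hsub : ((k : ℤ) - 1 - ((1 : ℕ) : ℤ)) = (k : ℤ) - 2 := by push_cast; ring
  rw [hsub] at hle
  have hsup : s * (d : ℤ) ≤ vFun 1 n h := by rw [hs]; exact hle
  have hm' : s * (d : ℤ) + 1 ≤ m := by rw [hm]; omega
  -- ceiling bound
  have hdQ : (0 : ℚ) < (d : ℚ) := by exact_mod_cast hd0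
  have hceil : s + 1 ≤ ⌈(m : ℚ) / (d : ℚ)⌉ := by
    by_contra hlt
    push_neg at hlt
    have h1 : ⌈(m : ℚ) / (d : ℚ)⌉ ≤ s := by omega
    have h2 : (m : ℚ) / (d : ℚ) ≤ (⌈(m : ℚ) / (d : ℚ)⌉ : ℚ) := Int.le_ceil _
    have h3 : (m : ℚ) / (d : ℚ) ≤ (s : ℚ) := h2.trans (by exact_mod_cast h1)
    have h4 : (m : ℚ) ≤ (s : ℚ) * (d : ℚ) := by rw [div_le_iff₀ hdQ] at h3; exact h3
    have h5 : m ≤ s * (d : ℤ) := by exact_mod_cast h4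
    omega
  -- h * s ≥ k - 1
  have hh0 : (0 : ℤ) < (h : ℤ) := by exact_mod_cast hh
  have hhs : (k : ℤ) - 1 ≤ (h : ℤ) * s := by
    have h1 := Int.emod_lt_of_pos ((k : ℤ) - 2) hh0
    have h2 := Int.mul_ediv_add_emod ((k : ℤ) - 2) (h : ℤ)
    have h3 := Int.emod_nonneg ((k : ℤ) - 2) hh0.ne'
    have h4 : (h : ℤ) * s = (h : ℤ) * (((k : ℤ) - 2) / (h : ℤ)) + h := by rw [hs]; ring
    omega
  have hnd : (n : ℤ) / (d : ℤ) = (k : ℤ) := by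
    rw [hk]; push_cast; exact Int.mul_ediv_cancel_left _ hdZ
  rw [hnd]
  have hmul : (h : ℤ) * (s + 1) ≤ (h : ℤ) * ⌈(m : ℚ) / (d : ℚ)⌉ :=
    mul_le_mul_of_nonneg_left hceil hh0.le
  have hx : (h : ℤ) * (s + 1) = (h : ℤ) * s + h := by ring
  omega
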